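/- For any height trees T and S with ℏ(min T) ≥ ℏ(min S) there exists a surjective height morphism f : T → S. -/

import Mathlib

open Set

/-- The linearly ordered class of heights: `⊥` plays the role of `−1`, ordinals are
coerced, and `⊤` plays the role of `∞`. -/
abbrev Hgt : Type 1 := WithBot (WithTop Ordinal.{0})

/-- A height tree: a tree (a partial order with least element whose lower sets are
finite chains) with a height function satisfying the axioms of Definition 2.2. -/
structure HeightTree where
  /-- the underlying set of vertices -/
  T : Type
  [po : PartialOrder T]
  [bot : OrderBot T]
  /-- lower sets are finite -/
  lower_finite : ∀ x : T, (Set.Iic x).Finite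
  /-- lower sets are chains -/
  lower_chain : ∀ x : T, IsChain (· ≤ ·) (Set.Iic x)
  /-- the height function -/
  h : T → Hgt
  /-- all non-`⊥`, non-`⊤` heights are countable ordinals -/
  h_countable : ∀ x : T, ∀ α : Ordinal.{0},
    h x = ((α : WithTop Ordinal.{0}) : Hgt) → α.card ≤ Cardinal.aleph0
  /-- each vertex has exactly one successor of height `−1` (its central point) -/
  center : ∀ x : T, ∃! y : T, x ⋖ y ∧ h y = ⊥
  /-- if `h x ∈ {−1, 0}` then the central point is the only successor of `x` -/
  succ_single : ∀ x : T, h x ≤ (0 : Hgt) → ∀ y z : T, x ⋖ y → x ⋖ z → y = z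
  /-- if `h x > 0` then `x` has countably infinitely many successors -/
  succ_ctble : ∀ x : T, (0 : Hgt) < h x →
    {y : T | x ⋖ y}.Countable ∧ {y : T | x ⋖ y}.Infinite
  /-- if `h x = ∞` then all but finitely many successors of `x` have height `∞` -/
  succ_top : ∀ x : T, h x = (⊤ : Hgt) → {y : T | x ⋖ y ∧ h y ≠ (⊤ : Hgt)}.Finite
  /-- if `0 < h x < ∞` then `h x = lim_{y ∈ suc x} (h y + 1)`: it is an upper bound … -/
  succ_le : ∀ x : T, (0 : Hgt) < h x → h x < (⊤ : Hgt) → ∀ y : T, x ⋖ y → h y + 1 ≤ h x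
  /-- … and for every `β < h x` all but finitely many successors `y` have `β < h y + 1` -/
  succ_lim : ∀ x : T, (0 : Hgt) < h x → h x < (⊤ : Hgt) →
    ∀ β : Hgt, β < h x → {y : T | x ⋖ y ∧ ¬ β < h y + 1}.Finite

attribute [instance] HeightTree.po HeightTree.bot

/-- The boundary of a tree: the set of its branches (maximal chains). -/
def HeightTree.Branch (t : HeightTree) : Type :=
  {b : Set t.T // IsMaxChain (· ≤ ·) b}

/-- The set `⇑x` of branches containing a vertex `x`. -/
def HeightTree.up (t : HeightTree) (x : t.T) : Set t.Branch := {b | x ∈ b.1}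

/-- The canonical topology on the boundary of a height tree, generated by the subbase
`{⇑x : h x ≠ −1} ∪ {∂T \ ⇑x : x ∈ T}`. -/
def HeightTree.canonTop (t : HeightTree) : TopologicalSpace t.Branch :=
  TopologicalSpace.generateFrom
    ({S | ∃ x : t.T, t.h x ≠ ⊥ ∧ S = t.up x} ∪ {S | ∃ x : t.T, S = (t.up x)ᶜ})

/-- A norm on a height tree. -/
structure IsTreeNorm (t : HeightTree) (n : t.T → ℝ) : Prop where
  mono : ∀ x y : t.T, x ≤ y → n y ≤ n x
  nonneg : ∀ x : t.T, 0 ≤ n x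
  zero_iff : ∀ x : t.T, n x = 0 ↔ t.h x = ⊥
  finite : ∀ ε : ℝ, 0 < ε → {x : t.T | ε ≤ n x}.Finite

/-- `d` is the canonical distance on the boundary determined by the norm `n`:
`d x x = 0` and, for distinct branches `x ≠ y` with meet `m = max (x ∩ y)`,
`d x y = max {‖z‖ : z ∈ (x ∪ y) ∩ suc m}`. -/
def IsCanonDist (t : HeightTree) (n : t.T → ℝ) (d : t.Branch → t.Branch → ℝ) : Prop :=
  (∀ b : t.Branch, d b b = 0) ∧
  ∀ x y : t.Branch, x ≠ y → ∀ m : t.T, IsGreatest (x.1 ∩ y.1) m →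
    IsGreatest (n '' ((x.1 ∪ y.1) ∩ {z : t.T | m ⋖ z})) (d x y)

/-- A height morphism between height trees. -/
def IsHeightMorphism (t s : HeightTree) (f : t.T → s.T) : Prop :=
  (∀ x : t.T, s.h (f x) ≤ t.h x) ∧
  (∀ x y : t.T, x ⋖ y → f x ⋖ f y) ∧
  (∀ x y : t.T, x ⋖ y → t.h y = ⊥ → s.h (f y) = ⊥) ∧
  (∀ x y z : t.T, x ⋖ y → x ⋖ z → t.h y ≠ ⊥ → t.h z ≠ ⊥ → s.h (f y) ≠ ⊥ →
    f y = f z → y = z)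




theorem hgt_bot_add_one : (⊥ : Hgt) + 1 = ⊥ := by simp

theorem hgt_top_add_one : (⊤ : Hgt) + 1 = ⊤ := by
  have h : (⊤:Hgt) = ((⊤: WithTop Ordinal):Hgt) := rfl
  rw [h, ← WithBot.coe_one, ← WithBot.coe_add]
  exact congrArg _ (WithTop.top_add _)

theorem hgt_le_of_lt_add_one {a b : Hgt} (ha : a ≠ ⊥) (h : a < b + 1) : a ≤ b := by
  induction b using WithBot.recBotCoe with
  | bot => rw [hgt_bot_add_one] at h; exact absurd h (not_lt_bot)
  | coe b =>
    induction b using WithTop.recTopCoe with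
    | top => exact le_top
    | coe b =>
      induction a using WithBot.recBotCoe with
      | bot => exact absurd rfl ha
      | coe a =>
        induction a using WithTop.recTopCoe with
        | top =>
          exfalso
          have he : ((b:WithTop Ordinal):Hgt) + 1 = (((b+1:Ordinal):WithTop Ordinal):Hgt) := by
            push_cast; ring
          rw [he] at h
          exact absurd h (by simp [WithBot.coe_lt_coe])
        | coe a =>
          have he : ((b:WithTop Ordinal):Hgt) + 1 = (((b+1:Ordinal):WithTop Ordinal):Hgt) := by
            push_cast; ring
          rw [he, WithBot.coe_lt_coe, WithTop.coe_lt_coe, Order.lt_add_one_iff] at h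
          exact_mod_cast h

theorem hgt_lt_add_one_self {a : Hgt} (ha : a ≠ ⊥) (ht : a ≠ ⊤) : a < a + 1 := by
  induction a using WithBot.recBotCoe with
  | bot => exact absurd rfl ha
  | coe a =>
    induction a using WithTop.recTopCoe with
    | top => exact absurd rfl ht
    | coe a =>
      have he : ((a:WithTop Ordinal):Hgt) + 1 = (((a+1:Ordinal):WithTop Ordinal):Hgt) := by
        push_cast; ring
      rw [he, WithBot.coe_lt_coe, WithTop.coe_lt_coe]
      exact lt_add_one a
namespace HeightTree

open scoped Classical

variable (t : HeightTree)

theorem exists_pred (x : t.T) (hx : x ≠ ⊥) :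
    ∃ p : t.T, p ⋖ x ∧ ∀ q : t.T, q ⋖ x → q = p := by
  have hfin : (Set.Iio x).Finite := (t.lower_finite x).subset (fun z hz => le_of_lt hz)
  have hne : (Set.Iio x).Nonempty := ⟨⊥, bot_lt_iff_ne_bot.mpr hx⟩
  obtain ⟨m, hm, hmax⟩ : ∃ m ∈ Set.Iio x, ∀ a ∈ Set.Iio x, m ≤ a → m = a := by
    obtain ⟨m, hm⟩ := hfin.exists_maximal hne
    exact ⟨m, hm.1, fun a ha h => le_antisymm h (hm.2 ha h)⟩
  have hgreat : ∀ a ∈ Set.Iio x, a ≤ m := by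
    intro a ha
    rcases eq_or_ne a m with rfl | hne'
    · exact le_rfl
    · rcases t.lower_chain x (le_of_lt ha) (le_of_lt hm) hne' with h1 | h1
      · exact h1
      · exact (hmax a ha h1).ge
  refine ⟨m, ⟨hm, fun z hmz hzx => absurd (hgreat z hzx) (fun hzm => lt_irrefl _ (lt_of_lt_of_le hmz hzm))⟩, ?_⟩
  intro q hq
  rcases lt_or_eq_of_le (hgreat q hq.lt) with h1 | h1
  · exact absurd hm (hq.2 h1)
  · exact h1

noncomputable def predv (x : t.T) : t.T :=
  if hx : x = ⊥ then ⊥ else (t.exists_pred x hx).choose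

theorem predv_covby {x : t.T} (hx : x ≠ ⊥) : t.predv x ⋖ x := by
  simp only [predv, dif_neg hx]; exact (t.exists_pred x hx).choose_spec.1

theorem covby_predv {x y : t.T} (h : y ⋖ x) : y = t.predv x := by
  have hx : x ≠ ⊥ := by
    intro e; subst e; exact absurd h.lt (by simp)
  simp only [predv, dif_neg hx]
  exact (t.exists_pred x hx).choose_spec.2 y h

noncomputable def lvl (x : t.T) : ℕ := (t.lower_finite x).toFinset.card

theorem lvl_lt {y x : t.T} (h : y < x) : t.lvl y < t.lvl x := by
  apply Finset.card_lt_card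
  have h1 : (t.lower_finite y).toFinset ⊆ (t.lower_finite x).toFinset := by
    intro z hz
    simp only [Set.Finite.mem_toFinset, Set.mem_Iic] at *
    exact hz.trans h.le
  exact (Finset.ssubset_iff_of_subset h1).mpr
    ⟨x, by simp, by simp only [Set.Finite.mem_toFinset, Set.mem_Iic]; exact fun hle => lt_irrefl _ (lt_of_lt_of_le h hle)⟩

noncomputable def ctr (x : t.T) : t.T := (t.center x).exists.choose

theorem ctr_covby (x : t.T) : x ⋖ t.ctr x := (t.center x).exists.choose_spec.1

theorem ctr_h (x : t.T) : t.h (t.ctr x) = ⊥ := (t.center x).exists.choose_spec.2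

theorem ctr_uniq {x y : t.T} (h1 : x ⋖ y) (h2 : t.h y = ⊥) : y = t.ctr x := by
  obtain ⟨c, _, hu⟩ := t.center x
  rw [hu y ⟨h1, h2⟩, hu (t.ctr x) ⟨t.ctr_covby x, t.ctr_h x⟩]

theorem nsucc_infinite {x : t.T} (h0 : (0 : Hgt) < t.h x) :
    {y : t.T | x ⋖ y ∧ t.h y ≠ ⊥}.Infinite := by
  have hinf := (t.succ_ctble x h0).2
  apply (hinf.diff (Set.finite_singleton (t.ctr x))).mono
  intro y hy
  exact ⟨hy.1, fun hb => hy.2 (t.ctr_uniq hy.1 hb)⟩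

end HeightTree
section Pick

variable {α : Type*} (A : ℕ → Set α)
  (hA : ∀ (n : ℕ) (l : List α), ∃ a, a ∈ A n ∧ a ∉ l)

noncomputable def pickL : ℕ → List α
  | 0 => []
  | n + 1 => pickL n ++ [(hA n (pickL n)).choose]

noncomputable def pickF (n : ℕ) : α := (hA n (pickL A hA n)).choose

theorem pickF_mem (n : ℕ) : pickF A hA n ∈ A n :=
  (hA n (pickL A hA n)).choose_spec.1

theorem pickF_not_mem (n : ℕ) : pickF A hA n ∉ pickL A hA n :=
  (hA n (pickL A hA n)).choose_spec.2

theorem pickF_mem_pickL {m n : ℕ} (h : m < n) : pickF A hA m ∈ pickL A hA n := by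
  induction n with
  | zero => omega
  | succ n ih =>
    show pickF A hA m ∈ pickL A hA n ++ [(hA n (pickL A hA n)).choose]
    rw [List.mem_append]
    rcases Nat.lt_or_ge m n with h1 | h1
    · exact Or.inl (ih h1)
    · have : m = n := by omega
      subst this
      exact Or.inr (by simp [pickF])

theorem pickF_injective : Function.Injective (pickF A hA) := by
  intro m n h
  by_contra hne
  rcases Nat.lt_or_ge m n with h1 | h1
  · exact pickF_not_mem A hA n (h ▸ pickF_mem_pickL A hA h1)
  · have h2 : n < m := by omega
    exact pickF_not_mem A hA m (h ▸ pickF_mem_pickL A hA h2)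

end Pick
theorem dominators_cofinite (t s : HeightTree) (x : t.T) (u : s.T)
    (hle : s.h u ≤ t.h x) (hu0 : (0 : Hgt) < s.h u) (v : s.T) (hv : u ⋖ v)
    (hvb : s.h v ≠ ⊥) :
    {y : t.T | x ⋖ y ∧ ¬ s.h v ≤ t.h y}.Finite := by
  rcases eq_or_ne (t.h x) ⊤ with hx | hx
  · apply (t.succ_top x hx).subset
    rintro y ⟨hy1, hy2⟩
    exact ⟨hy1, fun ht => hy2 (ht ▸ le_top)⟩
  · have hut : s.h u ≠ ⊤ := fun e => hx (top_le_iff.mp (e ▸ hle))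
    have hxlt : t.h x < ⊤ := lt_of_le_of_ne le_top hx
    have h1 : s.h v + 1 ≤ s.h u := s.succ_le u hu0 (lt_of_le_of_ne le_top hut) v hv
    have hvt : s.h v ≠ ⊤ := by
      intro e
      rw [e, hgt_top_add_one] at h1
      exact hut (top_le_iff.mp h1)
    have hvlt : s.h v < t.h x :=
      lt_of_lt_of_le (lt_of_lt_of_le (hgt_lt_add_one_self hvb hvt) h1) hle
    apply (t.succ_lim x (lt_of_lt_of_le hu0 hle) hxlt (s.h v) hvlt).subset
    rintro y ⟨hy1, hy2⟩
    refine ⟨hy1, fun hlt => hy2 ?_⟩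
    rcases eq_or_ne (t.h y) ⊥ with hb | hb
    · rw [hb, hgt_bot_add_one] at hlt
      exact absurd hlt (not_lt_bot)
    · exact hgt_le_of_lt_add_one hvb hlt
theorem key_lemma (t s : HeightTree) (x : t.T) (u : s.T) (hle : s.h u ≤ t.h x) :
    ∃ g : t.T → s.T,
      (∀ y, x ⋖ y → u ⋖ g y) ∧
      (∀ y, x ⋖ y → s.h (g y) ≤ t.h y) ∧
      (∀ y, x ⋖ y → t.h y = ⊥ → s.h (g y) = ⊥) ∧
      (∀ y z, x ⋖ y → x ⋖ z → s.h (g y) ≠ ⊥ → g y = g z → y = z) ∧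
      (∀ v, u ⋖ v → ∃ y, x ⋖ y ∧ g y = v) := by
  classical
  rcases le_or_gt (s.h u) 0 with hu0 | hu0
  · refine ⟨fun _ => s.ctr u, fun y _ => s.ctr_covby u,
      fun y _ => by rw [s.ctr_h]; exact bot_le,
      fun y _ _ => s.ctr_h u,
      fun y z _ _ hne _ => absurd (s.ctr_h u) hne,
      fun v hv => ⟨t.ctr x, t.ctr_covby x,
        s.succ_single u hu0 (s.ctr u) v (s.ctr_covby u) hv⟩⟩
  · -- main case : `s.h u > 0`, hence `t.h x > 0` too
    have hx0 : (0 : Hgt) < t.h x := lt_of_lt_of_le hu0 hle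
    set Nu : Set s.T := {v : s.T | u ⋖ v ∧ s.h v ≠ ⊥} with hNu
    have hNuc : Nu.Countable := ((s.succ_ctble u hu0).1).mono (fun v hv => hv.1)
    have hNui : Nu.Infinite := s.nsucc_infinite hu0
    -- an injective enumeration of Nu
    haveI : Countable ↥Nu := hNuc.to_subtype
    haveI : Infinite ↥Nu := hNui.to_subtype
    haveI : Encodable ↥Nu := Encodable.ofCountable ↥Nu
    haveI : Denumerable ↥Nu := Denumerable.ofEncodableOfInfinite ↥Nu
    set E : ↥Nu ≃ ℕ := Denumerable.eqv ↥Nu with hE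
    set e : ℕ → s.T := fun n => ((E.symm n : ↥Nu) : s.T) with he
    have he_mem : ∀ n, e n ∈ Nu := fun n => (E.symm n).2
    have he_inj : Function.Injective e :=
      fun m n h => E.symm.injective (Subtype.val_injective h)
    have he_surj : ∀ v ∈ Nu, ∃ n, e n = v := by
      intro v hv
      exact ⟨E ⟨v, hv⟩, by simp [he]⟩
    -- the sets of eligible images
    set A : ℕ → Set t.T :=
      fun n => {y : t.T | (x ⋖ y ∧ t.h y ≠ ⊥) ∧ s.h (e n) ≤ t.h y} with hA
    have hAinf : ∀ n, (A n).Infinite := by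
      intro n
      apply ((t.nsucc_infinite hx0).diff
        (dominators_cofinite t s x u hle hu0 (e n) (he_mem n).1 (he_mem n).2)).mono
      rintro y ⟨⟨hy1, hy2⟩, hy3⟩
      refine ⟨⟨hy1, hy2⟩, ?_⟩
      by_contra hcon
      exact hy3 ⟨hy1, hcon⟩
    have hApick : ∀ (n : ℕ) (l : List t.T), ∃ a, a ∈ A n ∧ a ∉ l := by
      intro n l
      obtain ⟨a, ha⟩ := ((hAinf n).diff l.finite_toSet).nonempty
      exact ⟨a, ha.1, by simpa using ha.2⟩
    set Y : ℕ → t.T := pickF A hApick with hY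
    have hYinj : Function.Injective Y := pickF_injective A hApick
    have hYmem : ∀ n, Y n ∈ A n := fun n => pickF_mem A hApick n
    set g : t.T → s.T :=
      fun y => if h : ∃ n, Y n = y then e h.choose else s.ctr u with hg
    have hg_of : ∀ n, g (Y n) = e n := by
      intro n
      have h : ∃ m, Y m = Y n := ⟨n, rfl⟩
      have : h.choose = n := hYinj h.choose_spec
      simp only [hg, dif_pos h, this]
    have hg_not : ∀ y, t.h y = ⊥ → g y = s.ctr u := by
      intro y hy
      have h : ¬ ∃ n, Y n = y := by
        rintro ⟨n, rfl⟩
        exact (hYmem n).1.2 hy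
      simp only [hg, dif_neg h]
    refine ⟨g, ?_, ?_, ?_, ?_, ?_⟩
    · intro y _
      by_cases h : ∃ n, Y n = y
      · simp only [hg, dif_pos h]; exact (he_mem h.choose).1
      · simp only [hg, dif_neg h]; exact s.ctr_covby u
    · intro y _
      by_cases h : ∃ n, Y n = y
      · obtain ⟨n, rfl⟩ := h
        rw [hg_of n]
        exact (hYmem n).2
      · simp only [hg, dif_neg h, s.ctr_h]; exact bot_le
    · intro y _ hy
      rw [hg_not y hy, s.ctr_h]
    · intro y z _ _ hne hgyz
      by_cases h1 : ∃ n, Y n = y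
      · obtain ⟨n, rfl⟩ := h1
        by_cases h2 : ∃ m, Y m = z
        · obtain ⟨m, rfl⟩ := h2
          rw [hg_of n, hg_of m] at hgyz
          exact congrArg Y (he_inj hgyz)
        · rw [hg_of n] at hgyz hne
          simp only [hg, dif_neg h2] at hgyz
          exact absurd (hgyz ▸ s.ctr_h u) hne
      · simp only [hg, dif_neg h1] at hne
        exact absurd (s.ctr_h u) hne
    · intro v hv
      rcases eq_or_ne (s.h v) ⊥ with hb | hb
      · refine ⟨t.ctr x, t.ctr_covby x, ?_⟩
        rw [hg_not (t.ctr x) (t.ctr_h x), ← s.ctr_uniq hv hb]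
      · obtain ⟨n, rfl⟩ := he_surj v ⟨hv, hb⟩
        exact ⟨Y n, (hYmem n).1.1, hg_of n⟩

open scoped Classical

noncomputable def Gfun (t s : HeightTree) (x : t.T) (u : s.T) : t.T → s.T :=
  if h : s.h u ≤ t.h x then (key_lemma t s x u h).choose else fun _ => u

theorem Gfun_spec (t s : HeightTree) (x : t.T) (u : s.T) (h : s.h u ≤ t.h x) :
    (∀ y, x ⋖ y → u ⋖ Gfun t s x u y) ∧
    (∀ y, x ⋖ y → s.h (Gfun t s x u y) ≤ t.h y) ∧
    (∀ y, x ⋖ y → t.h y = ⊥ → s.h (Gfun t s x u y) = ⊥) ∧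
    (∀ y z, x ⋖ y → x ⋖ z → s.h (Gfun t s x u y) ≠ ⊥ →
      Gfun t s x u y = Gfun t s x u z → y = z) ∧
    (∀ v, u ⋖ v → ∃ y, x ⋖ y ∧ Gfun t s x u y = v) := by
  simp only [Gfun, dif_pos h]
  exact (key_lemma t s x u h).choose_spec

noncomputable def buildF (t s : HeightTree) : t.T → s.T :=
  WellFounded.fix (InvImage.wf t.lvl Nat.lt_wfRel.wf)
    (fun x ih =>
      if hx : x = ⊥ then ⊥
      else Gfun t s (t.predv x)
        (ih (t.predv x) (t.lvl_lt (t.predv_covby hx).lt)) x)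

theorem buildF_eq (t s : HeightTree) (x : t.T) :
    buildF t s x = if hx : x = ⊥ then ⊥
      else Gfun t s (t.predv x) (buildF t s (t.predv x)) x := by
  unfold buildF
  rw [WellFounded.fix_eq]

theorem buildF_bot (t s : HeightTree) : buildF t s (⊥ : t.T) = ⊥ := by
  rw [buildF_eq]; simp

theorem buildF_cov_eq (t s : HeightTree) {x y : t.T} (h : x ⋖ y) :
    buildF t s y = Gfun t s x (buildF t s x) y := by
  have hy : y ≠ ⊥ := by
    intro e; subst e; exact absurd h.lt (by simp)
  rw [buildF_eq t s y, dif_neg hy, ← t.covby_predv h]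

theorem buildF_le (t s : HeightTree) (hle : s.h ⊥ ≤ t.h ⊥) (x : t.T) :
    s.h (buildF t s x) ≤ t.h x := by
  have main : ∀ (n : ℕ) (x : t.T), t.lvl x = n → s.h (buildF t s x) ≤ t.h x := by
    intro n
    induction n using Nat.strong_induction_on with
    | _ n ih =>
      intro x hxn
      rcases eq_or_ne x ⊥ with rfl | hx
      · rw [buildF_bot]; exact hle
      · have hcov := t.predv_covby hx
        have hinv := ih _ (hxn ▸ t.lvl_lt hcov.lt) (t.predv x) rfl
        rw [buildF_cov_eq t s hcov]
        exact (Gfun_spec t s _ _ hinv).2.1 x hcov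
  exact main (t.lvl x) x rfl

theorem buildF_surj (t s : HeightTree) (hle : s.h ⊥ ≤ t.h ⊥) :
    Function.Surjective (buildF t s) := by
  have main : ∀ (n : ℕ) (v : s.T), s.lvl v = n → ∃ x, buildF t s x = v := by
    intro n
    induction n using Nat.strong_induction_on with
    | _ n ih =>
      intro v hvn
      rcases eq_or_ne v ⊥ with rfl | hv
      · exact ⟨⊥, buildF_bot t s⟩
      · have hcov := s.predv_covby hv
        obtain ⟨x, hx⟩ := ih _ (hvn ▸ s.lvl_lt hcov.lt) (s.predv v) rfl
        have hinv := buildF_le t s hle x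
        obtain ⟨y, hy1, hy2⟩ := (Gfun_spec t s x (buildF t s x) hinv).2.2.2.2 v (hx ▸ hcov)
        exact ⟨y, by rw [buildF_cov_eq t s hy1, hy2]⟩
  intro v; exact main (s.lvl v) v rfl


/-- For any height trees `T, S` with `ℏ(min T) ≥ ℏ(min S)` there exists a surjective
height morphism `f : T → S`. -/
theorem stmt12 (t s : HeightTree) (hle : s.h ⊥ ≤ t.h ⊥) :
    ∃ f : t.T → s.T, IsHeightMorphism t s f ∧ Function.Surjective f := by
  refine ⟨buildF t s, ⟨buildF_le t s hle, ?_, ?_, ?_⟩, buildF_surj t s hle⟩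
  · intro x y h
    rw [buildF_cov_eq t s h]
    exact (Gfun_spec t s x _ (buildF_le t s hle x)).1 y h
  · intro x y h hb
    rw [buildF_cov_eq t s h]
    exact (Gfun_spec t s x _ (buildF_le t s hle x)).2.2.1 y h hb
  · intro x y z h1 h2 _ _ hne heq
    rw [buildF_cov_eq t s h1] at hne heq
    rw [buildF_cov_eq t s h2] at heq
    exact (Gfun_spec t s x _ (buildF_le t s hle x)).2.2.2.1 y z h1 h2 hne heq
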